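/- For every integer n ≥ 2, Σ_{j=1}^{∞} t(n, {1}_{j−1}) = Σ_{s=0}^{∞} [ (1)_s (1)_s (1/2)_s^{n−1} ] / [ (3/2)_s^{n} · s! ], where (a)_s = a(a+1)···(a+s−1) is the Pochhammer symbol with (a)_0 = 1. (The right-hand side is the generalized hypergeometric value ₙ₊₁Fₙ(1, 1, {1/2}_{n−1}; {3/2}_n; 1).) -/

import Mathlib

open Polynomial

/-- Multiple t-value: sum over strictly decreasing tuples of odd positive
integers. -/
noncomputable def multT {k : ℕ} (a : Fin k → ℕ) : ℝ :=
  ∑' n : {f : Fin k → ℕ // StrictAnti f ∧ ∀ i, Odd (f i)},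
    ∏ i, 1 / ((n.1 i : ℝ) ^ (a i))

namespace TAux

open Finset
open scoped ENNReal

/-! ### The real-valued product `P` -/

noncomputable def P (s : ℕ) : ℝ := ∏ i ∈ Finset.range s, (2*(i:ℝ)+2)/(2*(i:ℝ)+1)

lemma P_pos (s : ℕ) : 0 < P s :=
  Finset.prod_pos fun i _ => by positivity

lemma P_succ (s : ℕ) : P (s+1) = P s * ((2*(s:ℝ)+2)/(2*(s:ℝ)+1)) := by
  rw [P, Finset.prod_range_succ, ← P]

lemma P_sq_le (s : ℕ) : P s ^ 2 ≤ 4*(s:ℝ)+1 := by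
  induction s with
  | zero => simp [P]
  | succ s ih =>
    rw [P_succ, mul_pow, div_pow, mul_div_assoc']
    have h1 : (0:ℝ) < (2*(s:ℝ)+1)^2 := by positivity
    rw [div_le_iff₀ h1]
    push_cast
    nlinarith [sq_nonneg (P s), P_pos s]

/-! ### Pochhammer facts -/

lemma poch_half_mul_P (s : ℕ) :
    (ascPochhammer ℝ s).eval (1/2) * P s = (s.factorial : ℝ) := by
  induction s with
  | zero => simp [P]
  | succ s ih =>
    rw [ascPochhammer_succ_eval, P_succ, Nat.factorial_succ]
    push_cast
    have h1 : (2*(s:ℝ)+1) ≠ 0 := by positivity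
    field_simp
    linear_combination (2*(s:ℝ)+1) * ih

lemma poch_half_pos (s : ℕ) : 0 < (ascPochhammer ℝ s).eval (1/2) := by
  have h := poch_half_mul_P s
  have h2 : (0:ℝ) < (s.factorial : ℝ) := by positivity
  nlinarith [P_pos s]

lemma poch_32 (s : ℕ) :
    (ascPochhammer ℝ s).eval (3/2) = (2*(s:ℝ)+1) * (ascPochhammer ℝ s).eval (1/2) := by
  induction s with
  | zero => simp
  | succ s ih =>
    rw [ascPochhammer_succ_eval, ascPochhammer_succ_eval, ih]
    push_cast
    ring

lemma rhs_term (n : ℕ) (hn : 2 ≤ n) (s : ℕ) :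
    ((ascPochhammer ℝ s).eval 1 * (ascPochhammer ℝ s).eval 1 *
        (ascPochhammer ℝ s).eval (1 / 2) ^ (n - 1)) /
      ((ascPochhammer ℝ s).eval (3 / 2) ^ n * (Nat.factorial s : ℝ)) =
    P s / (2*(s:ℝ)+1) ^ n := by
  obtain ⟨m, rfl⟩ : ∃ m, n = m + 2 := ⟨n - 2, by omega⟩
  have hc : (ascPochhammer ℝ s).eval (1/2) * P s = (s.factorial : ℝ) := poch_half_mul_P s
  have hcpos := poch_half_pos s
  have hfac : (0:ℝ) < (s.factorial : ℝ) := by positivity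
  have hq : (0:ℝ) < 2*(s:ℝ)+1 := by positivity
  rw [ascPochhammer_eval_one, poch_32]
  have hm : m + 2 - 1 = m + 1 := rfl
  rw [hm, mul_pow]
  rw [div_eq_div_iff (by positivity) (by positivity)]
  have hPpos := P_pos s
  calc (s.factorial : ℝ) * (s.factorial : ℝ) * (ascPochhammer ℝ s).eval (1/2) ^ (m+1) *
        (2*(s:ℝ)+1) ^ (m+2)
      = ((ascPochhammer ℝ s).eval (1/2) * P s) * (s.factorial : ℝ) *
          (ascPochhammer ℝ s).eval (1/2) ^ (m+1) * (2*(s:ℝ)+1) ^ (m+2) := by rw [hc]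
    _ = P s * ((2*(s:ℝ)+1) ^ (m+2) * (ascPochhammer ℝ s).eval (1/2) ^ (m+2) *
          (s.factorial : ℝ)) := by ring
def oddsBelow (s : ℕ) : Finset ℕ := (Finset.range (2*s+1)).filter (fun q => Odd q)

lemma mem_oddsBelow {q s : ℕ} : q ∈ oddsBelow s ↔ q < 2*s+1 ∧ Odd q := by
  simp [oddsBelow, Finset.mem_filter, Finset.mem_range, and_comm]

lemma oddsBelow_eq_image (s : ℕ) :
    oddsBelow s = (Finset.range s).image (fun i => 2*i+1) := by
  ext q
  simp only [mem_oddsBelow, Finset.mem_image, Finset.mem_range]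
  constructor
  · rintro ⟨hlt, k, rfl⟩
    exact ⟨k, by omega, by omega⟩
  · rintro ⟨i, hi, rfl⟩
    exact ⟨by omega, i, rfl⟩

lemma card_oddsBelow (s : ℕ) : (oddsBelow s).card = s := by
  rw [oddsBelow_eq_image, Finset.card_image_of_injective _ (fun a b h => by omega),
    Finset.card_range]

noncomputable def MT (n j : ℕ) : ℝ≥0∞ :=
  ∑' f : {f : Fin (j+1) → ℕ // StrictAnti f ∧ ∀ i, Odd (f i)},
    ∏ i, (((f.1 i : ℝ≥0∞)) ^ (if i = 0 then n else 1))⁻¹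

noncomputable def phi (j : ℕ)
    (x : Σ s : ℕ, {S : Finset ℕ // S ∈ (oddsBelow s).powersetCard j}) :
    {f : Fin (j+1) → ℕ // StrictAnti f ∧ ∀ i, Odd (f i)} := by
  refine ⟨Fin.cons (2*x.1+1)
    (fun i => x.2.1.orderEmbOfFin (Finset.mem_powersetCard.mp x.2.2).2 i.rev), ?_, ?_⟩
  · have hsub := (Finset.mem_powersetCard.mp x.2.2).1
    intro a b hab
    induction b using Fin.cases with
    | zero => exact absurd hab (Fin.not_lt_zero a)
    | succ b =>
      induction a using Fin.cases with
      | zero =>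
        simp only [Fin.cons_zero, Fin.cons_succ]
        exact (mem_oddsBelow.mp (hsub (Finset.orderEmbOfFin_mem _ _ _))).1
      | succ a =>
        simp only [Fin.cons_succ]
        exact (x.2.1.orderEmbOfFin _).strictMono
          (Fin.rev_lt_rev.mpr (Fin.succ_lt_succ_iff.mp hab))
  · intro i
    induction i using Fin.cases with
    | zero => exact ⟨x.1, by simp⟩
    | succ i =>
      have hsub := (Finset.mem_powersetCard.mp x.2.2).1
      simpa using (mem_oddsBelow.mp (hsub (Finset.orderEmbOfFin_mem _ _ _))).2

lemma phi_inj (j : ℕ) : Function.Injective (phi j) := by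
  rintro ⟨s, S, hS⟩ ⟨s', S', hS'⟩ h
  have hval := congrArg Subtype.val h
  have h0 : 2*s+1 = 2*s'+1 := by
    have := congrFun hval 0
    simpa [phi] using this
  obtain rfl : s = s' := by omega
  have hS2 := (Finset.mem_powersetCard.mp hS).2
  have hS2' := (Finset.mem_powersetCard.mp hS').2
  have hemb : ∀ i : Fin j, S.orderEmbOfFin hS2 i = S'.orderEmbOfFin hS2' i := by
    intro i
    have := congrFun hval i.rev.succ
    simpa [phi, Fin.rev_rev] using this
  obtain rfl : S = S' := by
    rw [← Finset.coe_inj, ← Finset.range_orderEmbOfFin S hS2,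
      ← Finset.range_orderEmbOfFin S' hS2']
    exact congrArg Set.range (funext hemb)
  rfl

lemma phi_surj (j : ℕ) : Function.Surjective (phi j) := by
  rintro ⟨f, hanti, hodd⟩
  obtain ⟨s, hs⟩ := hodd 0
  set S : Finset ℕ := Finset.image (fun i : Fin j => f i.succ) Finset.univ with hSdef
  have hinj : Function.Injective (fun i : Fin j => f i.succ) := fun a b hab =>
    Fin.succ_injective _ (hanti.injective hab)
  have hcard : S.card = j := by
    rw [hSdef, Finset.card_image_of_injective _ hinj, Finset.card_univ, Fintype.card_fin]
  have hsub : S ∈ (oddsBelow s).powersetCard j := by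
    rw [Finset.mem_powersetCard]
    refine ⟨fun q hq => ?_, hcard⟩
    simp only [hSdef, Finset.mem_image, Finset.mem_univ, true_and] at hq
    obtain ⟨i, rfl⟩ := hq
    rw [mem_oddsBelow]
    refine ⟨?_, hodd _⟩
    have h1 : f i.succ < f 0 := hanti (Fin.succ_pos i)
    omega
  refine ⟨⟨s, S, hsub⟩, ?_⟩
  apply Subtype.ext
  have hcard' := (Finset.mem_powersetCard.mp hsub).2
  have hmono : StrictMono (fun k : Fin j => f (k.rev).succ) := fun a b hab =>
    hanti (Fin.succ_lt_succ_iff.mpr (Fin.rev_lt_rev.mpr hab))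
  have hmem : ∀ k : Fin j, f (k.rev).succ ∈ S := fun k =>
    Finset.mem_image.mpr ⟨k.rev, Finset.mem_univ _, rfl⟩
  have hemb := Finset.orderEmbOfFin_unique hcard' hmem hmono
  funext i
  induction i using Fin.cases with
  | zero => simpa [phi] using hs.symm
  | succ i =>
    show S.orderEmbOfFin (Finset.mem_powersetCard.mp hsub).2 i.rev = f i.succ
    rw [← congrFun hemb i.rev, Fin.rev_rev]

lemma phi_eval (n j s : ℕ) (S : Finset ℕ) (hS : S ∈ (oddsBelow s).powersetCard j) :
    (∏ i, ((((phi j ⟨s, ⟨S, hS⟩⟩).1 i : ℝ≥0∞)) ^ (if i = 0 then n else 1))⁻¹)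
      = ((((2*s+1 : ℕ)) : ℝ≥0∞)^n)⁻¹ * ∏ q ∈ S, ((q : ℝ≥0∞))⁻¹ := by
  rw [Fin.prod_univ_succ]
  have hcard := (Finset.mem_powersetCard.mp hS).2
  congr 1
  trans (∏ x : Fin j, ((S.orderEmbOfFin hcard x.rev : ℝ≥0∞))⁻¹)
  · refine Finset.prod_congr rfl fun x _ => ?_
    show ((((phi j ⟨s, ⟨S, hS⟩⟩).1 x.succ : ℝ≥0∞)) ^ (if x.succ = (0 : Fin (j+1)) then n else 1))⁻¹
        = _
    rw [if_neg (Fin.succ_ne_zero x), pow_one]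
    rfl
  · rw [← Finset.prod_coe_sort S (fun q => ((q : ℝ≥0∞))⁻¹),
      ← Equiv.prod_comp (Fin.revPerm.trans (S.orderIsoOfFin hcard).toEquiv)
      (fun x : S => ((x : ℝ≥0∞))⁻¹)]
    rfl

lemma MT_eq (n j : ℕ) :
    MT n j = ∑' s : ℕ, ((((2*s+1 : ℕ)) : ℝ≥0∞)^n)⁻¹ *
      ∑ S ∈ (oddsBelow s).powersetCard j, ∏ q ∈ S, ((q : ℝ≥0∞))⁻¹ := by
  rw [MT, ← Equiv.tsum_eq (Equiv.ofBijective (phi j) ⟨phi_inj j, phi_surj j⟩)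
      (fun f => ∏ i, (((f.1 i : ℝ≥0∞)) ^ (if i = 0 then n else 1))⁻¹)]
  rw [ENNReal.tsum_sigma']
  refine tsum_congr fun s => ?_
  rw [Finset.mul_sum, ← Finset.tsum_subtype ((oddsBelow s).powersetCard j)
    (fun S => ((((2*s+1 : ℕ)) : ℝ≥0∞)^n)⁻¹ * ∏ q ∈ S, ((q : ℝ≥0∞))⁻¹)]
  exact tsum_congr fun S => phi_eval n j s S.1 S.2

/-! ### Summation over `j` -/

lemma sum_MT (n : ℕ) : ∑' j : ℕ, MT n j
    = ∑' s : ℕ, ((((2*s+1 : ℕ)) : ℝ≥0∞)^n)⁻¹ *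
        ∏ q ∈ oddsBelow s, (1 + ((q : ℝ≥0∞))⁻¹) := by
  simp only [MT_eq]
  rw [ENNReal.tsum_comm]
  refine tsum_congr fun s => ?_
  rw [ENNReal.tsum_mul_left]
  congr 1
  rw [tsum_eq_sum (s := Finset.range (s+1))
    (fun j hj => by
      have : (oddsBelow s).card < j := by
        rw [card_oddsBelow]; simpa using hj
      rw [Finset.powersetCard_eq_empty.mpr this, Finset.sum_empty])]
  have hprod := Finset.prod_add (fun q : ℕ => ((q : ℝ≥0∞))⁻¹) (fun _ : ℕ => (1:ℝ≥0∞)) (oddsBelow s)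
  simp only [Finset.prod_const_one, mul_one] at hprod
  calc ∑ j ∈ Finset.range (s+1), ∑ S ∈ (oddsBelow s).powersetCard j, ∏ q ∈ S, ((q:ℝ≥0∞))⁻¹
      = ∑ S ∈ (oddsBelow s).powerset, ∏ q ∈ S, ((q:ℝ≥0∞))⁻¹ := by
        conv_rhs => rw [Finset.powerset_card_disjiUnion (oddsBelow s)]
        erw [Finset.sum_disjiUnion]; rw [card_oddsBelow]
    _ = ∏ q ∈ oddsBelow s, (1 + ((q:ℝ≥0∞))⁻¹) := by
        rw [← hprod]
        exact Finset.prod_congr rfl fun q _ => add_comm _ _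

/-! ### Conversion to `ofReal` -/

lemma prod_oddsBelow (s : ℕ) :
    ∏ q ∈ oddsBelow s, (1 + ((q : ℝ≥0∞))⁻¹) = ENNReal.ofReal (P s) := by
  rw [oddsBelow_eq_image, Finset.prod_image (fun a _ b _ h => by omega), P,
    ENNReal.ofReal_prod_of_nonneg (fun i _ => by positivity)]
  refine Finset.prod_congr rfl fun i _ => ?_
  have h2 : (2*(i:ℝ)+2)/(2*(i:ℝ)+1) = 1 + ((2*i+1 : ℕ) : ℝ)⁻¹ := by
    have h1 : (2*(i:ℝ)+1) ≠ 0 := by positivity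
    push_cast
    field_simp
    ring
  rw [h2, ENNReal.ofReal_add zero_le_one (by positivity), ENNReal.ofReal_one,
    ENNReal.ofReal_inv_of_pos (by positivity), ENNReal.ofReal_natCast]

lemma coeff_ofReal (n s : ℕ) :
    ((((2*s+1 : ℕ)) : ℝ≥0∞)^n)⁻¹ * ENNReal.ofReal (P s)
      = ENNReal.ofReal (P s / (2*(s:ℝ)+1)^n) := by
  have h1 : (0:ℝ) < (2*(s:ℝ)+1)^n := by positivity
  rw [div_eq_mul_inv, ENNReal.ofReal_mul (P_pos s).le,
    ENNReal.ofReal_inv_of_pos h1, ENNReal.ofReal_pow (by positivity)]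
  have h2 : (2*(s:ℝ)+1) = ((2*s+1 : ℕ) : ℝ) := by push_cast; ring
  rw [h2, ENNReal.ofReal_natCast, mul_comm]

lemma sum_MT' (n : ℕ) : ∑' j : ℕ, MT n j
    = ∑' s : ℕ, ENNReal.ofReal (P s / (2*(s:ℝ)+1)^n) := by
  rw [sum_MT]
  exact tsum_congr fun s => by rw [prod_oddsBelow, coeff_ofReal]

/-! ### Finiteness -/

lemma P_le (s : ℕ) : P s ≤ 2 * Real.sqrt ((s:ℝ)+1) := by
  have h1 : P s ^ 2 ≤ 4*((s:ℝ)+1) := by nlinarith [P_sq_le s]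
  have h2 : Real.sqrt (P s ^ 2) ≤ Real.sqrt (4*((s:ℝ)+1)) := Real.sqrt_le_sqrt h1
  rw [Real.sqrt_sq (P_pos s).le] at h2
  calc P s ≤ Real.sqrt (4*((s:ℝ)+1)) := h2
    _ = 2 * Real.sqrt ((s:ℝ)+1) := by
        rw [show (4:ℝ)*((s:ℝ)+1) = (2*Real.sqrt ((s:ℝ)+1))^2 by
          rw [mul_pow, Real.sq_sqrt (by positivity)]; ring]
        exact Real.sqrt_sq (by positivity)

lemma term_bound (n : ℕ) (hn : 2 ≤ n) (s : ℕ) :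
    P s / (2*(s:ℝ)+1)^n ≤ 2 * (((s:ℝ)+1) ^ (-(3/2 : ℝ))) := by
  have hden : ((s:ℝ)+1)^2 ≤ (2*(s:ℝ)+1)^n := by
    calc ((s:ℝ)+1)^2 ≤ (2*(s:ℝ)+1)^2 := by
          apply pow_le_pow_left₀ (by positivity)
          push_cast; linarith
      _ ≤ (2*(s:ℝ)+1)^n := by
          apply pow_le_pow_right₀ (by push_cast; linarith) hn
  have h1 : P s / (2*(s:ℝ)+1)^n ≤ (2 * Real.sqrt ((s:ℝ)+1)) / ((s:ℝ)+1)^2 :=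
    div_le_div₀ (by positivity) (P_le s) (by positivity) hden
  refine h1.trans (le_of_eq ?_)
  rw [Real.sqrt_eq_rpow, ← Real.rpow_natCast ((s:ℝ)+1) 2, mul_div_assoc,
    ← Real.rpow_sub (by positivity)]
  norm_num

lemma bound_summable : Summable (fun s : ℕ => 2 * (((s:ℝ)+1) ^ (-(3/2 : ℝ)))) := by
  apply Summable.mul_left
  have h1 : Summable (fun m : ℕ => 1 / (m:ℝ) ^ ((3/2 : ℝ))) :=
    Real.summable_one_div_nat_rpow.mpr (by norm_num)
  have h2 := (summable_nat_add_iff 1).mpr h1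
  refine h2.congr fun s => ?_
  rw [Real.rpow_neg (by positivity), one_div]
  push_cast
  ring_nf

lemma rhs_ne_top (n : ℕ) (hn : 2 ≤ n) :
    ∑' s : ℕ, ENNReal.ofReal (P s / (2*(s:ℝ)+1)^n) ≠ ⊤ := by
  have hle : ∑' s : ℕ, ENNReal.ofReal (P s / (2*(s:ℝ)+1)^n)
      ≤ ∑' s : ℕ, ENNReal.ofReal (2 * (((s:ℝ)+1) ^ (-(3/2 : ℝ)))) :=
    ENNReal.tsum_le_tsum fun s => ENNReal.ofReal_le_ofReal (term_bound n hn s)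
  have heq : ∑' s : ℕ, ENNReal.ofReal (2 * (((s:ℝ)+1) ^ (-(3/2 : ℝ))))
      = ENNReal.ofReal (∑' s : ℕ, 2 * (((s:ℝ)+1) ^ (-(3/2 : ℝ)))) :=
    (ENNReal.ofReal_tsum_of_nonneg (fun s => by positivity) bound_summable).symm
  exact ne_top_of_le_ne_top (heq ▸ ENNReal.ofReal_ne_top) hle

/-! ### Bridging real and extended-real sums -/

lemma tsum_toReal_ofReal {α : Type*} (f : α → ℝ) (hf : ∀ a, 0 ≤ f a) :
    ∑' a, f a = (∑' a, ENNReal.ofReal (f a)).toReal := by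
  by_cases h : Summable f
  · rw [← ENNReal.ofReal_tsum_of_nonneg hf h, ENNReal.toReal_ofReal (tsum_nonneg hf)]
  · rw [tsum_eq_zero_of_not_summable h]
    have htop : ∑' a, ENNReal.ofReal (f a) = ⊤ := by
      by_contra htop
      have h2 := ENNReal.summable_toReal htop
      have h3 : (fun a => (ENNReal.ofReal (f a)).toReal) = f :=
        funext fun a => ENNReal.toReal_ofReal (hf a)
      rw [h3] at h2
      exact h h2
    rw [htop, ENNReal.toReal_top]

lemma multT_eq_toReal (n j : ℕ) :
    multT (fun s : Fin (j + 1) => if s = 0 then n else 1) = (MT n j).toReal := by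
  rw [multT, MT, tsum_toReal_ofReal _
    (fun f => Finset.prod_nonneg fun i _ => by positivity)]
  congr 1
  refine tsum_congr fun f => ?_
  rw [ENNReal.ofReal_prod_of_nonneg (fun i _ => by positivity)]
  refine Finset.prod_congr rfl fun i _ => ?_
  have hpos : 0 < (f.1 i : ℝ) := by
    have := (f.2.2 i)
    have : 0 < f.1 i := this.pos
    exact_mod_cast this
  rw [one_div, ENNReal.ofReal_inv_of_pos (by positivity),
    ENNReal.ofReal_pow (by positivity), ENNReal.ofReal_natCast]

lemma main (n : ℕ) (hn : 2 ≤ n) :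
    ∑' j : ℕ, multT (fun s : Fin (j + 1) => if s = 0 then n else 1) =
      ∑' s : ℕ,
        ((ascPochhammer ℝ s).eval 1 * (ascPochhammer ℝ s).eval 1 *
            (ascPochhammer ℝ s).eval (1 / 2) ^ (n - 1)) /
          ((ascPochhammer ℝ s).eval (3 / 2) ^ n * Nat.factorial s) := by
  have hne : ∀ j : ℕ, MT n j ≠ ⊤ := fun j =>
    ne_top_of_le_ne_top ((sum_MT' n) ▸ rhs_ne_top n hn) (ENNReal.le_tsum j)
  calc ∑' j : ℕ, multT (fun s : Fin (j + 1) => if s = 0 then n else 1)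
      = ∑' j : ℕ, (MT n j).toReal := tsum_congr fun j => multT_eq_toReal n j
    _ = (∑' j : ℕ, MT n j).toReal := (ENNReal.tsum_toReal_eq hne).symm
    _ = (∑' s : ℕ, ENNReal.ofReal (P s / (2*(s:ℝ)+1)^n)).toReal := by rw [sum_MT' n]
    _ = ∑' s : ℕ, (ENNReal.ofReal (P s / (2*(s:ℝ)+1)^n)).toReal :=
        ENNReal.tsum_toReal_eq fun s => ENNReal.ofReal_ne_top
    _ = ∑' s : ℕ, P s / (2*(s:ℝ)+1)^n :=
        tsum_congr fun s =>
          ENNReal.toReal_ofReal (div_nonneg (P_pos s).le (by positivity))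
    _ = _ := tsum_congr fun s => (rhs_term n hn s).symm

end TAux

/-- `Σ_{j≥1} t(n, {1}_(j-1)) = (n+1)F(n)(1, 1, {1/2}_(n-1); {3/2}_n; 1)`.
Here the summand indexed by `j : ℕ` is `t(n, {1}_j)`, i.e. exponent tuple
of length `j + 1` with first entry `n` followed by `j` ones. -/
theorem tHeightOne_row_sum (n : ℕ) (hn : 2 ≤ n) :
    ∑' j : ℕ, multT (fun s : Fin (j + 1) => if s = 0 then n else 1) =
      ∑' s : ℕ,
        ((ascPochhammer ℝ s).eval 1 * (ascPochhammer ℝ s).eval 1 *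
            (ascPochhammer ℝ s).eval (1 / 2) ^ (n - 1)) /
          ((ascPochhammer ℝ s).eval (3 / 2) ^ n * Nat.factorial s) :=
  TAux.main n hn
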